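/- arXiv:1009.1347 — 2 statements merged into one kernel-verified Lean document; each statement's English description precedes it below -/
import Mathlib

section
/- In the Weyl-group setting (V rational inner product space, orthogonal maps w_0,…,w_m, reflections s_{j_ℓ} in α_{j_ℓ}, w = w_0 s_{j_1} w_1 ⋯ s_{j_m} w_m, w^Δ = w_0 ⋯ w_m, β_{j_ℓ} = w_0 s_{j_1} ⋯ w_{ℓ−1}(α_{j_ℓ}), β^Δ_{j_ℓ} = w_0 ⋯ w_{ℓ−1}(α_{j_ℓ}), M the skew-symmetric matrix with M_{hℓ} = ⟨β_{j_h}, β_{j_ℓ}⟩ for h<ℓ, B(γ) = Σ_ℓ ⟨γ, β_{j_ℓ}⟩ e_ℓ, f(x,y) = M(x) + B(y)): for every γ ∈ V, the pair (Σ_{h=1}^m ⟨(β^Δ_{j_h})∨, w^Δ(γ)⟩ e_h, (w + w^Δ)(γ)) lies in the kernel of f. -/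
open scoped RealInnerProductSpace

/-- `pref w s ℓ = w₀ s₁ w₁ ⋯ s_ℓ w_ℓ` (composition of endomorphisms). -/
def pref {V : Type*} [NormedAddCommGroup V] [InnerProductSpace ℝ V]
    (w s : ℕ → Module.End ℝ V) : ℕ → Module.End ℝ V
  | 0 => w 0
  | ℓ + 1 => pref w s ℓ * s (ℓ + 1) * w (ℓ + 1)

/-- `plainPref w ℓ = w₀ w₁ ⋯ w_ℓ`. -/
def plainPref {V : Type*} [NormedAddCommGroup V] [InnerProductSpace ℝ V]
    (w : ℕ → Module.End ℝ V) : ℕ → Module.End ℝ V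
  | 0 => w 0
  | ℓ + 1 => plainPref w ℓ * w (ℓ + 1)

/-- `suff w m ℓ = w_ℓ w_{ℓ+1} ⋯ w_m`. -/
def suff {V : Type*} [NormedAddCommGroup V] [InnerProductSpace ℝ V]
    (w : ℕ → Module.End ℝ V) (m ℓ : ℕ) : Module.End ℝ V :=
  ((List.range (m + 1 - ℓ)).map fun i => w (ℓ + i)).prod

/-- `uop w s m ℓ = w₀ s₁ w₁ ⋯ w_{ℓ-1} (s_ℓ - id) w_ℓ ⋯ w_m`. -/
def uop {V : Type*} [NormedAddCommGroup V] [InnerProductSpace ℝ V]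
    (w s : ℕ → Module.End ℝ V) (m ℓ : ℕ) : Module.End ℝ V :=
  pref w s (ℓ - 1) * (s ℓ - 1) * suff w m ℓ

/-- `vop w s m ℓ = w₀ s₁ w₁ ⋯ w_{ℓ-1} (s_ℓ + id) w_ℓ ⋯ w_m`. -/
def vop {V : Type*} [NormedAddCommGroup V] [InnerProductSpace ℝ V]
    (w s : ℕ → Module.End ℝ V) (m ℓ : ℕ) : Module.End ℝ V :=
  pref w s (ℓ - 1) * (s ℓ + 1) * suff w m ℓ

/-- `β_{j_ℓ} = w₀ s₁ w₁ ⋯ s_{ℓ-1} w_{ℓ-1} (α_{j_ℓ})`. -/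
def betaV {V : Type*} [NormedAddCommGroup V] [InnerProductSpace ℝ V]
    (w s : ℕ → Module.End ℝ V) (α : ℕ → V) (ℓ : ℕ) : V :=
  pref w s (ℓ - 1) (α ℓ)

/-- `β^Δ_{j_ℓ} = w₀ w₁ ⋯ w_{ℓ-1} (α_{j_ℓ})`. -/
def betaD {V : Type*} [NormedAddCommGroup V] [InnerProductSpace ℝ V]
    (w : ℕ → Module.End ℝ V) (α : ℕ → V) (ℓ : ℕ) : V :=
  plainPref w (ℓ - 1) (α ℓ)

/-- `⟨(β^Δ_{j_ℓ})∨, w^Δ(γ)⟩` where `β∨ = (2/⟨β,β⟩)β`. -/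
noncomputable def coeffc {V : Type*} [NormedAddCommGroup V] [InnerProductSpace ℝ V]
    (w s : ℕ → Module.End ℝ V) (α : ℕ → V) (m : ℕ) (γ : V) (ℓ : ℕ) : ℝ :=
  (2 / ⟪betaD w α ℓ, betaD w α ℓ⟫) * ⟪betaD w α ℓ, plainPref w m γ⟫

section Aux
variable {V : Type*} [NormedAddCommGroup V] [InnerProductSpace ℝ V]
variable (w s : ℕ → Module.End ℝ V) (α : ℕ → V)

lemma suff_top (m : ℕ) : suff w m (m + 1) = 1 := by
  simp [suff]

lemma suff_step {m ℓ : ℕ} (h : ℓ ≤ m) : suff w m ℓ = w ℓ * suff w m (ℓ + 1) := by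
  have h1 : m + 1 - ℓ = (m - ℓ) + 1 := by omega
  have h2 : m + 1 - (ℓ + 1) = m - ℓ := by omega
  rw [suff, suff, h1, h2, List.range_succ_eq_map]
  simp only [List.map_cons, List.map_map, List.prod_cons, Nat.add_zero]
  congr 2
  refine List.map_congr_left ?_
  intro i _
  simp only [Function.comp]
  congr 1
  omega

lemma s_ortho (hα : ∀ ℓ, α ℓ ≠ 0)
    (hs : ∀ ℓ (v : V), s ℓ v = v - ((2 * ⟪α ℓ, v⟫) / ⟪α ℓ, α ℓ⟫) • α ℓ)
    (ℓ : ℕ) (x y : V) : ⟪s ℓ x, s ℓ y⟫ = ⟪x, y⟫ := by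
  have ha : ⟪α ℓ, α ℓ⟫ ≠ 0 := fun h => hα ℓ (inner_self_eq_zero.mp h)
  rw [hs, hs]
  simp only [inner_sub_left, inner_sub_right, real_inner_smul_left, real_inner_smul_right]
  rw [real_inner_comm (α ℓ) x]
  field_simp
  ring
end Aux
section Aux2
variable {V : Type*} [NormedAddCommGroup V] [InnerProductSpace ℝ V]
variable {w s : ℕ → Module.End ℝ V} {α : ℕ → V}

lemma pref_ortho (hα : ∀ ℓ, α ℓ ≠ 0)
    (hw : ∀ i (x y : V), ⟪w i x, w i y⟫ = ⟪x, y⟫)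
    (hs : ∀ ℓ (v : V), s ℓ v = v - ((2 * ⟪α ℓ, v⟫) / ⟪α ℓ, α ℓ⟫) • α ℓ)
    (ℓ : ℕ) (x y : V) : ⟪pref w s ℓ x, pref w s ℓ y⟫ = ⟪x, y⟫ := by
  induction ℓ generalizing x y with
  | zero => exact hw 0 x y
  | succ n ih =>
    simp only [pref, Module.End.mul_apply]
    rw [ih, s_ortho s α hα hs, hw]

lemma plainPref_ortho (hw : ∀ i (x y : V), ⟪w i x, w i y⟫ = ⟪x, y⟫)
    (ℓ : ℕ) (x y : V) : ⟪plainPref w ℓ x, plainPref w ℓ y⟫ = ⟪x, y⟫ := by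
  induction ℓ generalizing x y with
  | zero => exact hw 0 x y
  | succ n ih =>
    simp only [plainPref, Module.End.mul_apply]
    rw [ih, hw]

lemma plainPref_mul_suff {m : ℕ} : ∀ k ℓ, ℓ + k = m →
    plainPref w ℓ * suff w m (ℓ + 1) = plainPref w m := by
  intro k
  induction k with
  | zero => intro ℓ h; subst h; rw [suff_top]; simp
  | succ n ih =>
    intro ℓ h
    rw [suff_step w (by omega : ℓ + 1 ≤ m), ← mul_assoc]
    exact ih (ℓ + 1) (by omega)
end Aux2
section Aux3
variable {V : Type*} [NormedAddCommGroup V] [InnerProductSpace ℝ V]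
variable {w s : ℕ → Module.End ℝ V} {α : ℕ → V}

lemma coeffc_eq (hα : ∀ ℓ, α ℓ ≠ 0)
    (hw : ∀ i (x y : V), ⟪w i x, w i y⟫ = ⟪x, y⟫)
    {m ℓ : ℕ} (hm : ℓ + 1 ≤ m) (γ : V) :
    coeffc w s α m γ (ℓ + 1) =
      2 * ⟪α (ℓ + 1), suff w m (ℓ + 1) γ⟫ / ⟪α (ℓ + 1), α (ℓ + 1)⟫ := by
  have hps : plainPref w ℓ * suff w m (ℓ + 1) = plainPref w m :=
    plainPref_mul_suff (m - ℓ) ℓ (by omega)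
  have h1 : plainPref w m γ = plainPref w ℓ (suff w m (ℓ + 1) γ) := by
    rw [← hps]; rfl
  unfold coeffc betaD
  simp only [Nat.add_sub_cancel, h1]
  rw [plainPref_ortho hw, plainPref_ortho hw]
  ring

/-- Key telescoping formula. -/
lemma keyF (hα : ∀ ℓ, α ℓ ≠ 0)
    (hw : ∀ i (x y : V), ⟪w i x, w i y⟫ = ⟪x, y⟫)
    (hs : ∀ ℓ (v : V), s ℓ v = v - ((2 * ⟪α ℓ, v⟫) / ⟪α ℓ, α ℓ⟫) • α ℓ)
    {m : ℕ} (γ : V) : ∀ ℓ ≤ m,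
    pref w s ℓ (suff w m (ℓ + 1) γ) = plainPref w m γ -
      ∑ i ∈ Finset.range ℓ, coeffc w s α m γ (i + 1) • betaV w s α (i + 1) := by
  intro ℓ
  induction ℓ with
  | zero =>
    intro _
    simp only [Finset.range_zero, Finset.sum_empty, sub_zero]
    have : plainPref w 0 * suff w m (0 + 1) = plainPref w m :=
      plainPref_mul_suff m 0 (by omega)
    rw [show pref w s 0 = plainPref w 0 from rfl, ← this]; rfl
  | succ n ih =>
    intro hn
    have hsu : suff w m (n + 1) = w (n + 1) * suff w m (n + 2) := suff_step w (by omega)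
    have h1 : pref w s (n + 1) (suff w m (n + 2) γ)
        = pref w s n (s (n + 1) (suff w m (n + 1) γ)) := by
      simp only [pref, Module.End.mul_apply, hsu]
    rw [h1, hs]
    have hc : (2 * ⟪α (n + 1), suff w m (n + 1) γ⟫) / ⟪α (n + 1), α (n + 1)⟫
        = coeffc w s α m γ (n + 1) := by
      rw [coeffc_eq hα hw (by omega : n + 1 ≤ m) γ]
    rw [map_sub, map_smul, hc, ih (by omega), Finset.sum_range_succ]
    rw [show pref w s n (α (n + 1)) = betaV w s α (n + 1) from rfl]
    abel

lemma keyG (hα : ∀ ℓ, α ℓ ≠ 0)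
    (hw : ∀ i (x y : V), ⟪w i x, w i y⟫ = ⟪x, y⟫)
    (hs : ∀ ℓ (v : V), s ℓ v = v - ((2 * ⟪α ℓ, v⟫) / ⟪α ℓ, α ℓ⟫) • α ℓ)
    {m ℓ : ℕ} (hm : ℓ + 1 ≤ m) (γ : V) :
    2 * ⟪betaV w s α (ℓ + 1), plainPref w m γ⟫ =
      ⟪betaV w s α (ℓ + 1), betaV w s α (ℓ + 1)⟫ * coeffc w s α m γ (ℓ + 1) +
      2 * ∑ i ∈ Finset.range ℓ,
        coeffc w s α m γ (i + 1) * ⟪betaV w s α (ℓ + 1), betaV w s α (i + 1)⟫ := by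
  have ha : ⟪α (ℓ + 1), α (ℓ + 1)⟫ ≠ 0 := fun h => hα (ℓ + 1) (inner_self_eq_zero.mp h)
  have hb : betaV w s α (ℓ + 1) = pref w s ℓ (α (ℓ + 1)) := rfl
  have h1 : ⟪betaV w s α (ℓ + 1), pref w s ℓ (suff w m (ℓ + 1) γ)⟫
      = ⟪α (ℓ + 1), suff w m (ℓ + 1) γ⟫ := by
    rw [hb, pref_ortho hα hw hs]
  have h2 : ⟪betaV w s α (ℓ + 1), betaV w s α (ℓ + 1)⟫ = ⟪α (ℓ + 1), α (ℓ + 1)⟫ := by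
    rw [hb, pref_ortho hα hw hs]
  have hc : coeffc w s α m γ (ℓ + 1)
      = 2 * ⟪α (ℓ + 1), suff w m (ℓ + 1) γ⟫ / ⟪α (ℓ + 1), α (ℓ + 1)⟫ :=
    coeffc_eq hα hw hm γ
  rw [keyF hα hw hs γ ℓ (by omega)] at h1
  rw [inner_sub_right, inner_sum] at h1
  simp only [real_inner_smul_right] at h1
  rw [h2, hc]
  rw [Finset.mul_sum]
  have := h1
  field_simp
  simp only [mul_assoc]
  linarith [h1, Finset.mul_sum (Finset.range ℓ) (fun i => coeffc w s α m γ (i + 1) * ⟪betaV w s α (ℓ + 1), betaV w s α (i + 1)⟫) (2:ℝ)]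
end Aux3
lemma sum_range_fin {m : ℕ} (ℓ : Fin m) (F : ℕ → ℝ) :
    ∑ i ∈ Finset.range ℓ.val, F i = ∑ h : Fin m, if h < ℓ then F h.val else 0 := by
  have : ∀ h : Fin m, (if h < ℓ then F h.val else 0)
      = (fun i : ℕ => if i < ℓ.val then F i else 0) h.val := by
    intro h; simp only [Fin.lt_def]
  rw [Finset.sum_congr rfl (fun h _ => this h),
    Fin.sum_univ_eq_sum_range (fun i : ℕ => if i < ℓ.val then F i else 0)]
  rw [Finset.range_eq_Ico m, ← Finset.sum_Ico_consecutive _ (Nat.zero_le ℓ.val) (le_of_lt ℓ.isLt)]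
  rw [show (Finset.Ico 0 ℓ.val) = Finset.range ℓ.val from (Finset.range_eq_Ico ℓ.val).symm ▸ rfl]
  have h2 : ∑ i ∈ Finset.Ico ℓ.val m, (if i < ℓ.val then F i else 0) = 0 := by
    apply Finset.sum_eq_zero
    intro i hi
    simp only [Finset.mem_Ico] at hi
    simp [Nat.not_lt.mpr hi.1]
  rw [h2, add_zero]
  apply Finset.sum_congr rfl
  intro i hi
  simp [Finset.mem_range.mp hi]
theorem pair_in_kernel_of_f
    {V : Type*} [NormedAddCommGroup V] [InnerProductSpace ℝ V] [FiniteDimensional ℝ V]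
    (m : ℕ) (w s : ℕ → Module.End ℝ V) (α : ℕ → V)
    (hα : ∀ ℓ, α ℓ ≠ 0)
    (hw : ∀ i (x y : V), ⟪w i x, w i y⟫ = ⟪x, y⟫)
    (hs : ∀ ℓ (v : V), s ℓ v = v - ((2 * ⟪α ℓ, v⟫) / ⟪α ℓ, α ℓ⟫) • α ℓ)
    (M : Matrix (Fin m) (Fin m) ℝ)
    (hM : ∀ i l : Fin m, M i l =
      if i < l then ⟪betaV w s α (↑i + 1), betaV w s α (↑l + 1)⟫
      else if l < i then -⟪betaV w s α (↑l + 1), betaV w s α (↑i + 1)⟫ else 0)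
    (γ : V) :
    (M.mulVec (fun h : Fin m => coeffc w s α m γ (↑h + 1)) +
        fun ℓ : Fin m => ⟪(pref w s m + plainPref w m) γ, betaV w s α (↑ℓ + 1)⟫) = 0 := by
  funext ℓ
  have hlm : (ℓ : ℕ) + 1 ≤ m := ℓ.isLt
  have hpref : pref w s m γ = plainPref w m γ -
      ∑ i ∈ Finset.range m, coeffc w s α m γ (i + 1) • betaV w s α (i + 1) := by
    have h := keyF hα hw hs γ m le_rfl
    rwa [suff_top, Module.End.one_apply] at h
  simp only [Pi.add_apply, Pi.zero_apply, Matrix.mulVec, dotProduct,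
    LinearMap.add_apply, hpref]
  rw [inner_add_left, inner_sub_left, sum_inner]
  simp only [real_inner_smul_left]
  have hG := keyG (w := w) (s := s) (α := α) hα hw hs hlm γ
  have hS : ∑ i ∈ Finset.range m,
        coeffc w s α m γ (i + 1) * ⟪betaV w s α (i + 1), betaV w s α ((ℓ : ℕ) + 1)⟫
      = ∑ h : Fin m,
        coeffc w s α m γ ((h : ℕ) + 1) * ⟪betaV w s α ((h : ℕ) + 1), betaV w s α ((ℓ : ℕ) + 1)⟫ :=
    (Fin.sum_univ_eq_sum_range _ m).symm
  have hS2 : ∑ i ∈ Finset.range (ℓ : ℕ),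
        coeffc w s α m γ (i + 1) * ⟪betaV w s α ((ℓ : ℕ) + 1), betaV w s α (i + 1)⟫
      = ∑ h : Fin m, if h < ℓ then
          coeffc w s α m γ ((h : ℕ) + 1) * ⟪betaV w s α ((ℓ : ℕ) + 1), betaV w s α ((h : ℕ) + 1)⟫
        else 0 :=
    sum_range_fin ℓ _
  have hS3 : ⟪betaV w s α ((ℓ : ℕ) + 1), betaV w s α ((ℓ : ℕ) + 1)⟫ * coeffc w s α m γ ((ℓ : ℕ) + 1)
      = ∑ h : Fin m, if h = ℓ then
          ⟪betaV w s α ((ℓ : ℕ) + 1), betaV w s α ((ℓ : ℕ) + 1)⟫ * coeffc w s α m γ ((ℓ : ℕ) + 1)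
        else 0 := by
    rw [Finset.sum_ite_eq' Finset.univ ℓ]
    simp
  have hT : ∑ h : Fin m, (M ℓ h * coeffc w s α m γ ((h : ℕ) + 1)
      + ((if h = ℓ then
            ⟪betaV w s α ((ℓ : ℕ) + 1), betaV w s α ((ℓ : ℕ) + 1)⟫ * coeffc w s α m γ ((ℓ : ℕ) + 1)
          else 0)
        + 2 * (if h < ℓ then
            coeffc w s α m γ ((h : ℕ) + 1) * ⟪betaV w s α ((ℓ : ℕ) + 1), betaV w s α ((h : ℕ) + 1)⟫
          else 0)
        - coeffc w s α m γ ((h : ℕ) + 1)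
            * ⟪betaV w s α ((h : ℕ) + 1), betaV w s α ((ℓ : ℕ) + 1)⟫)) = 0 := by
    apply Finset.sum_eq_zero
    intro h _
    rcases lt_trichotomy h ℓ with hlt | heq | hgt
    · simp only [hM ℓ h, hlt, hlt.ne, not_lt.mpr hlt.le, if_true, if_false,
        ite_true, ite_false, eq_self_iff_true]
      rw [real_inner_comm (betaV w s α ((ℓ : ℕ) + 1)) (betaV w s α ((h : ℕ) + 1))]
      ring
    · subst heq
      simp only [hM h h, lt_irrefl, if_false, ite_false, if_true, ite_true, eq_self_iff_true]
      ring
    · simp only [hM ℓ h, hgt, hgt.ne', not_lt.mpr hgt.le, if_true, if_false,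
        ite_true, ite_false]
      rw [real_inner_comm (betaV w s α ((h : ℕ) + 1)) (betaV w s α ((ℓ : ℕ) + 1))]
      ring
  simp only [Finset.sum_add_distrib, Finset.sum_sub_distrib, ← Finset.mul_sum] at hT
  rw [real_inner_comm (plainPref w m γ)] at *
  linarith [hT, hG, hS, hS2, hS3]
end

section
/- In the Weyl-group setting above, the linear map Ψ : ker(w + w^Δ) → ker(M), defined by Ψ(γ) = Σ_{h=1}^m ⟨(β^Δ_{j_h})∨, w^Δ(γ)⟩ e_h, is a linear isomorphism. In particular dim ker(M) = dim ker(w + w^Δ), where M is the m×m skew-symmetric matrix with M_{hℓ} = ⟨β_{j_h}, β_{j_ℓ}⟩ for h<ℓ. -/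
open scoped RealInnerProductSpace

open Finset in
set_option linter.unusedSectionVars false

section Aux
variable {V : Type*} [NormedAddCommGroup V] [InnerProductSpace ℝ V]
variable {w s : ℕ → Module.End ℝ V} {α : ℕ → V}

lemma pref_succ_apply (ℓ : ℕ) (x : V) :
    pref w s (ℓ+1) x = pref w s ℓ (s (ℓ+1) (w (ℓ+1) x)) := rfl

lemma plainPref_succ_apply (ℓ : ℕ) (x : V) :
    plainPref w (ℓ+1) x = plainPref w ℓ (w (ℓ+1) x) := rfl

variable (hα : ∀ ℓ, α ℓ ≠ 0)
  (hw : ∀ i (x y : V), ⟪w i x, w i y⟫ = ⟪x, y⟫)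
  (hs : ∀ ℓ (v : V), s ℓ v = v - ((2 * ⟪α ℓ, v⟫) / ⟪α ℓ, α ℓ⟫) • α ℓ)

include hα hs in
lemma s_inner (ℓ : ℕ) (x y : V) : ⟪s ℓ x, s ℓ y⟫ = ⟪x, y⟫ := by
  have hne : ⟪α ℓ, α ℓ⟫ ≠ 0 := fun h => hα ℓ (inner_self_eq_zero.mp h)
  rw [hs, hs]
  simp only [inner_sub_left, inner_sub_right, real_inner_smul_left, real_inner_smul_right]
  rw [real_inner_comm x (α ℓ)]
  field_simp
  ring

include hw in
lemma plainPref_inner (h : ℕ) (x y : V) :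
    ⟪plainPref w h x, plainPref w h y⟫ = ⟪x, y⟫ := by
  induction h generalizing x y with
  | zero => exact hw 0 x y
  | succ h ih => rw [plainPref_succ_apply, plainPref_succ_apply, ih, hw]

include hα hw hs in
lemma pref_inner (h : ℕ) (x y : V) :
    ⟪pref w s h x, pref w s h y⟫ = ⟪x, y⟫ := by
  induction h generalizing x y with
  | zero => exact hw 0 x y
  | succ h ih => rw [pref_succ_apply, pref_succ_apply, ih, s_inner hα hs, hw]

include hα hw hs in
lemma G1 (h : ℕ) (y : V) : pref w s h y = plainPref w h y -
    ∑ k ∈ Finset.range h,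
      ((2 / ⟪plainPref w k (α (k+1)), plainPref w k (α (k+1))⟫) *
        ⟪plainPref w k (α (k+1)), plainPref w h y⟫) • pref w s k (α (k+1)) := by
  induction h generalizing y with
  | zero => simp [pref, plainPref]
  | succ h ih =>
    have h1 : pref w s (h+1) y = pref w s h (w (h+1) y)
        - ((2 * ⟪α (h+1), w (h+1) y⟫) / ⟪α (h+1), α (h+1)⟫) • pref w s h (α (h+1)) := by
      rw [pref_succ_apply, hs, map_sub, map_smul]
    rw [h1, ih (w (h+1) y), Finset.sum_range_succ]
    have h2 : ∀ z : V, plainPref w h z = plainPref w h z := fun _ => rfl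
    have hco : ((2 * ⟪α (h+1), w (h+1) y⟫) / ⟪α (h+1), α (h+1)⟫)
        = (2 / ⟪plainPref w h (α (h+1)), plainPref w h (α (h+1))⟫) *
          ⟪plainPref w h (α (h+1)), plainPref w (h+1) y⟫ := by
      rw [plainPref_succ_apply, plainPref_inner hw, plainPref_inner hw]
      ring
    rw [hco]
    rw [show plainPref w h (w (h+1) y) = plainPref w (h+1) y from rfl]
    abel

include hα hw hs in
lemma G3 (h : ℕ) (y : V) : pref w s h y = plainPref w h y +
    ∑ k ∈ Finset.range h,
      ((2 / ⟪pref w s k (α (k+1)), pref w s k (α (k+1))⟫) *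
        ⟪pref w s k (α (k+1)), pref w s h y⟫) • plainPref w k (α (k+1)) := by
  induction h generalizing y with
  | zero => simp [pref, plainPref]
  | succ h ih =>
    have hne : ⟪α (h+1), α (h+1)⟫ ≠ 0 := fun hz => hα _ (inner_self_eq_zero.mp hz)
    have main : pref w s (h+1) y = plainPref w h (s (h+1) (w (h+1) y)) +
        ∑ k ∈ Finset.range h,
          ((2 / ⟪pref w s k (α (k+1)), pref w s k (α (k+1))⟫) *
            ⟪pref w s k (α (k+1)), pref w s (h+1) y⟫) • plainPref w k (α (k+1)) :=
      ih (s (h+1) (w (h+1) y))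
    have hy' : plainPref w h (s (h+1) (w (h+1) y)) = plainPref w (h+1) y
        - ((2 * ⟪α (h+1), w (h+1) y⟫) / ⟪α (h+1), α (h+1)⟫) • plainPref w h (α (h+1)) := by
      rw [hs, map_sub, map_smul, plainPref_succ_apply]
    have hb : ⟪pref w s h (α (h+1)), pref w s (h+1) y⟫ = - ⟪α (h+1), w (h+1) y⟫ := by
      rw [pref_succ_apply, pref_inner hα hw hs, hs]
      rw [inner_sub_right, real_inner_smul_right]
      field_simp
      ring
    have hco : ((2 / ⟪pref w s h (α (h+1)), pref w s h (α (h+1))⟫) *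
        ⟪pref w s h (α (h+1)), pref w s (h+1) y⟫)
        = -((2 * ⟪α (h+1), w (h+1) y⟫) / ⟪α (h+1), α (h+1)⟫) := by
      rw [hb, pref_inner hα hw hs]
      ring
    calc pref w s (h+1) y = _ := main
      _ = (plainPref w (h+1) y
            - ((2 * ⟪α (h+1), w (h+1) y⟫) / ⟪α (h+1), α (h+1)⟫) • plainPref w h (α (h+1))) +
          ∑ k ∈ Finset.range h,
            ((2 / ⟪pref w s k (α (k+1)), pref w s k (α (k+1))⟫) *
              ⟪pref w s k (α (k+1)), pref w s (h+1) y⟫) • plainPref w k (α (k+1)) := by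
        rw [hy']
      _ = _ := by
        rw [Finset.sum_range_succ, hco]
        module

end Aux


lemma sum_range_coe {A : Type*} [AddCommMonoid A] {m : ℕ} (h : Fin m) (g : ℕ → A) :
    ∑ k ∈ Finset.range (h : ℕ), g k
      = ∑ k ∈ Finset.univ.filter (fun k : Fin m => k < h), g (k : ℕ) := by
  have hset : Finset.range (h : ℕ)
      = (Finset.univ.filter (fun k : Fin m => k < h)).map ⟨Fin.val, Fin.val_injective⟩ := by
    ext x
    simp only [Finset.mem_range, Finset.mem_map, Finset.mem_filter, Finset.mem_univ, true_and,
      Function.Embedding.coeFn_mk, Fin.lt_def]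
    constructor
    · intro hx
      exact ⟨⟨x, hx.trans h.isLt⟩, hx, rfl⟩
    · rintro ⟨a, ha, rfl⟩
      exact ha
  rw [hset, Finset.sum_map]
  rfl


section Aux2
variable {V : Type*} [NormedAddCommGroup V] [InnerProductSpace ℝ V]
variable (w s : ℕ → Module.End ℝ V) (α : ℕ → V) (m : ℕ)

/-- The linear map `γ ↦ (coeffc γ (h+1))_h`. -/
noncomputable def Phi : V →ₗ[ℝ] (Fin m → ℝ) where
  toFun γ := fun k : Fin m => coeffc w s α m γ (↑k + 1)
  map_add' x y := by
    funext k
    simp only [coeffc, map_add, inner_add_right, Pi.add_apply]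
    ring
  map_smul' c x := by
    funext k
    simp only [coeffc, map_smul, real_inner_smul_right, RingHom.id_apply, Pi.smul_apply,
      smul_eq_mul]
    ring

@[simp] lemma Phi_apply (γ : V) (k : Fin m) :
    Phi w s α m γ k = coeffc w s α m γ (↑k + 1) := rfl

/-- `X c = ∑ c_k β_k`. -/
noncomputable def Xc (c : Fin m → ℝ) : V := ∑ k : Fin m, c k • betaV w s α (↑k + 1)

/-- `(Cc)_k = ‖β_k‖² c_k - ⟪βΔ_k, X c⟫`. -/
noncomputable def Ccf (c : Fin m → ℝ) (k : Fin m) : ℝ :=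
  ⟪betaV w s α (↑k + 1), betaV w s α (↑k + 1)⟫ * c k - ⟪betaD w α (↑k + 1), Xc w s α m c⟫

end Aux2


section Main
variable {V : Type*} [NormedAddCommGroup V] [InnerProductSpace ℝ V]
variable {w s : ℕ → Module.End ℝ V} {α : ℕ → V} {m : ℕ}
variable (hα : ∀ ℓ, α ℓ ≠ 0)
  (hw : ∀ i (x y : V), ⟪w i x, w i y⟫ = ⟪x, y⟫)
  (hs : ∀ ℓ (v : V), s ℓ v = v - ((2 * ⟪α ℓ, v⟫) / ⟪α ℓ, α ℓ⟫) • α ℓ)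

include hα hw hs in
lemma nB (k : Fin m) :
    ⟪betaV w s α (↑k + 1), betaV w s α (↑k + 1)⟫ = ⟪α (↑k + 1), α (↑k + 1)⟫ :=
  pref_inner hα hw hs (k : ℕ) _ _

include hw in
lemma nD (k : Fin m) :
    ⟪betaD w α (↑k + 1), betaD w α (↑k + 1)⟫ = ⟪α (↑k + 1), α (↑k + 1)⟫ :=
  plainPref_inner hw (k : ℕ) _ _

include hα hw hs in
lemma G1m (γ : V) :
    pref w s m γ = plainPref w m γ - Xc w s α m (Phi w s α m γ) := by
  rw [G1 hα hw hs m γ]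
  congr 1
  exact (Fin.sum_univ_eq_sum_range
    (fun k => ((2 / ⟪plainPref w k (α (k+1)), plainPref w k (α (k+1))⟫) *
        ⟪plainPref w k (α (k+1)), plainPref w m γ⟫) • pref w s k (α (k+1))) m).symm

include hα hw hs in
lemma G3f (h : Fin m) :
    betaV w s α (↑h + 1) = betaD w α (↑h + 1)
      + ∑ k ∈ Finset.univ.filter (fun k : Fin m => k < h),
          ((2 * ⟪betaV w s α (↑k + 1), betaV w s α (↑h + 1)⟫)
              / ⟪betaV w s α (↑k + 1), betaV w s α (↑k + 1)⟫) • betaD w α (↑k + 1) := by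
  have h1 := G3 hα hw hs (↑h) (α (↑h + 1))
  rw [sum_range_coe h (fun k => ((2 / ⟪pref w s k (α (k+1)), pref w s k (α (k+1))⟫) *
      ⟪pref w s k (α (k+1)), pref w s (↑h) (α (↑h + 1))⟫) • plainPref w k (α (k+1)))] at h1
  calc betaV w s α (↑h + 1) = pref w s (↑h) (α (↑h + 1)) := rfl
    _ = _ := by
      rw [h1]
      congr 1
      apply Finset.sum_congr rfl
      intro k _
      simp only [betaV, Nat.add_sub_cancel]
      congr 1
      ring

end Main

section Main2
variable {V : Type*} [NormedAddCommGroup V] [InnerProductSpace ℝ V]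
variable {w s : ℕ → Module.End ℝ V} {α : ℕ → V} {m : ℕ}
variable (hα : ∀ ℓ, α ℓ ≠ 0)
  (hw : ∀ i (x y : V), ⟪w i x, w i y⟫ = ⟪x, y⟫)
  (hs : ∀ ℓ (v : V), s ℓ v = v - ((2 * ⟪α ℓ, v⟫) / ⟪α ℓ, α ℓ⟫) • α ℓ)
  (M : Matrix (Fin m) (Fin m) ℝ)
  (hM : ∀ i l : Fin m, M i l =
      if i < l then ⟪betaV w s α (↑i + 1), betaV w s α (↑l + 1)⟫
      else if l < i then -⟪betaV w s α (↑l + 1), betaV w s α (↑i + 1)⟫ else 0)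

include hM in
lemma Mrow (c : Fin m → ℝ) (h : Fin m) :
    M.mulVec c h = ⟪betaV w s α (↑h + 1), Xc w s α m c⟫
      - ⟪betaV w s α (↑h + 1), betaV w s α (↑h + 1)⟫ * c h
      - 2 * ∑ l ∈ Finset.univ.filter (fun l : Fin m => l < h),
          ⟪betaV w s α (↑h + 1), betaV w s α (↑l + 1)⟫ * c l := by
  have e1 : M.mulVec c h = ∑ l : Fin m, M h l * c l := by
    simp [Matrix.mulVec, dotProduct]
  have e2 : ⟪betaV w s α (↑h + 1), Xc w s α m c⟫
      = ∑ l : Fin m, ⟪betaV w s α (↑h + 1), betaV w s α (↑l + 1)⟫ * c l := by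
    simp only [Xc, inner_sum, real_inner_smul_right]
    exact Finset.sum_congr rfl fun l _ => mul_comm _ _
  have e3 : ⟪betaV w s α (↑h + 1), betaV w s α (↑h + 1)⟫ * c h
      = ∑ l : Fin m, if l = h then ⟪betaV w s α (↑h + 1), betaV w s α (↑l + 1)⟫ * c l else 0 := by
    rw [Finset.sum_ite_eq' Finset.univ h
      (fun l => ⟪betaV w s α (↑h + 1), betaV w s α (↑l + 1)⟫ * c l)]
    simp
  have e4 : 2 * ∑ l ∈ Finset.univ.filter (fun l : Fin m => l < h),
        ⟪betaV w s α (↑h + 1), betaV w s α (↑l + 1)⟫ * c l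
      = ∑ l : Fin m, if l < h then 2 * (⟪betaV w s α (↑h + 1), betaV w s α (↑l + 1)⟫ * c l)
          else 0 := by
    rw [Finset.sum_filter, Finset.mul_sum]
    exact Finset.sum_congr rfl fun l _ => by split <;> simp
  rw [e1, e2, e3, e4, ← Finset.sum_sub_distrib, ← Finset.sum_sub_distrib]
  apply Finset.sum_congr rfl
  intro l _
  rw [hM h l]
  rcases lt_trichotomy h l with hlt | heq | hgt
  · rw [if_pos hlt, if_neg (ne_of_gt hlt), if_neg (asymm hlt)]
    ring
  · subst heq
    rw [if_neg (lt_irrefl h), if_neg (lt_irrefl h), if_pos rfl, if_neg (lt_irrefl h)]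
    ring
  · rw [if_neg (asymm hgt), if_pos hgt, if_neg (ne_of_lt hgt), if_pos hgt,
      real_inner_comm (betaV w s α (↑l + 1))]
    ring

include hα hw hs hM in
lemma masterL (c : Fin m → ℝ) (h : Fin m) :
    M.mulVec c h = -(Ccf w s α m c h)
      - ∑ k ∈ Finset.univ.filter (fun k : Fin m => k < h),
          ((2 * ⟪betaV w s α (↑k + 1), betaV w s α (↑h + 1)⟫)
            / ⟪betaV w s α (↑k + 1), betaV w s α (↑k + 1)⟫) * Ccf w s α m c k := by
  rw [Mrow M hM c h]
  have hdiff : ⟪betaV w s α (↑h + 1), Xc w s α m c⟫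
      = ⟪betaD w α (↑h + 1), Xc w s α m c⟫
        + ∑ k ∈ Finset.univ.filter (fun k : Fin m => k < h),
            ((2 * ⟪betaV w s α (↑k + 1), betaV w s α (↑h + 1)⟫)
              / ⟪betaV w s α (↑k + 1), betaV w s α (↑k + 1)⟫) * ⟪betaD w α (↑k + 1), Xc w s α m c⟫ := by
    conv_lhs => rw [G3f hα hw hs h]
    rw [inner_add_left, sum_inner]
    simp only [real_inner_smul_left]
  rw [hdiff]
  simp only [Ccf]
  have hterm : ∀ k ∈ Finset.univ.filter (fun k : Fin m => k < h),
      ((2 * ⟪betaV w s α (↑k + 1), betaV w s α (↑h + 1)⟫)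
          / ⟪betaV w s α (↑k + 1), betaV w s α (↑k + 1)⟫) * ⟪betaD w α (↑k + 1), Xc w s α m c⟫
        - 2 * (⟪betaV w s α (↑h + 1), betaV w s α (↑k + 1)⟫ * c k)
        + ((2 * ⟪betaV w s α (↑k + 1), betaV w s α (↑h + 1)⟫)
          / ⟪betaV w s α (↑k + 1), betaV w s α (↑k + 1)⟫) *
            (⟪betaV w s α (↑k + 1), betaV w s α (↑k + 1)⟫ * c k
              - ⟪betaD w α (↑k + 1), Xc w s α m c⟫) = 0 := by
    intro k _
    have hne : ⟪betaV w s α (↑k + 1), betaV w s α (↑k + 1)⟫ ≠ 0 := by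
      rw [nB hα hw hs k]
      exact fun hz => hα _ (inner_self_eq_zero.mp hz)
    field_simp
    rw [real_inner_comm (betaV w s α (↑h + 1))]
    ring
  have hsum := Finset.sum_congr rfl hterm
  rw [Finset.sum_const, smul_zero] at hsum
  rw [Finset.sum_add_distrib, Finset.sum_sub_distrib, ← Finset.mul_sum] at hsum
  rw [Finset.mul_sum]
  rw [Finset.mul_sum] at hsum
  linarith [hsum]

include hα hw hs hM in
lemma kerIff (c : Fin m → ℝ) :
    M.mulVec c = 0 ↔ ∀ k, Ccf w s α m c k = 0 := by
  constructor
  · intro hc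
    have main : ∀ N : ℕ, ∀ h : Fin m, (h : ℕ) < N → Ccf w s α m c h = 0 := by
      intro N
      induction N with
      | zero => exact fun h hh => absurd hh (Nat.not_lt_zero _)
      | succ N ih =>
        intro h hh
        have hm := masterL hα hw hs M hM c h
        rw [congrFun hc h] at hm
        simp only [Pi.zero_apply] at hm
        have hzero : ∀ k ∈ Finset.univ.filter (fun k : Fin m => k < h),
            ((2 * ⟪betaV w s α (↑k + 1), betaV w s α (↑h + 1)⟫)
              / ⟪betaV w s α (↑k + 1), betaV w s α (↑k + 1)⟫) * Ccf w s α m c k = 0 := by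
          intro k hk
          have hkh : k < h := (Finset.mem_filter.mp hk).2
          rw [ih k (lt_of_lt_of_le hkh (Nat.lt_succ_iff.mp hh))]
          ring
        rw [Finset.sum_congr rfl hzero, Finset.sum_const, smul_zero] at hm
        linarith [hm]
    exact fun k => main ((k : ℕ) + 1) k (Nat.lt_succ_self _)
  · intro hC
    funext h
    have hm := masterL hα hw hs M hM c h
    rw [hm, hC h]
    have hzero : ∀ k ∈ Finset.univ.filter (fun k : Fin m => k < h),
        ((2 * ⟪betaV w s α (↑k + 1), betaV w s α (↑h + 1)⟫)
          / ⟪betaV w s α (↑k + 1), betaV w s α (↑k + 1)⟫) * Ccf w s α m c k = 0 := by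
      intro k _
      rw [hC k]; ring
    rw [Finset.sum_congr rfl hzero, Finset.sum_const, smul_zero]
    simp

end Main2
theorem Psi_isomorphism
    {V : Type*} [NormedAddCommGroup V] [InnerProductSpace ℝ V] [FiniteDimensional ℝ V]
    (m : ℕ) (w s : ℕ → Module.End ℝ V) (α : ℕ → V)
    (hα : ∀ ℓ, α ℓ ≠ 0)
    (hw : ∀ i (x y : V), ⟪w i x, w i y⟫ = ⟪x, y⟫)
    (hs : ∀ ℓ (v : V), s ℓ v = v - ((2 * ⟪α ℓ, v⟫) / ⟪α ℓ, α ℓ⟫) • α ℓ)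
    (M : Matrix (Fin m) (Fin m) ℝ)
    (hM : ∀ i l : Fin m, M i l =
      if i < l then ⟪betaV w s α (↑i + 1), betaV w s α (↑l + 1)⟫
      else if l < i then -⟪betaV w s α (↑l + 1), betaV w s α (↑i + 1)⟫ else 0) :
    (∃ e : LinearMap.ker (pref w s m + plainPref w m) ≃ₗ[ℝ] LinearMap.ker M.mulVecLin,
        ∀ γ : LinearMap.ker (pref w s m + plainPref w m),
          (e γ : Fin m → ℝ) = fun h : Fin m => coeffc w s α m (γ : V) (↑h + 1)) ∧
      Module.finrank ℝ (LinearMap.ker M.mulVecLin) =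
        Module.finrank ℝ (LinearMap.ker (pref w s m + plainPref w m)) := by
  have hne : ∀ ℓ : ℕ, ⟪α ℓ, α ℓ⟫ ≠ 0 := fun ℓ hz => hα ℓ (inner_self_eq_zero.mp hz)
  -- membership criterion
  have hmem : ∀ γ : V, γ ∈ LinearMap.ker (pref w s m + plainPref w m)
      ↔ (2:ℝ) • plainPref w m γ = Xc w s α m (Phi w s α m γ) := by
    intro γ
    rw [LinearMap.mem_ker, LinearMap.add_apply, G1m hα hw hs γ, sub_add_eq_add_sub,
      ← two_smul ℝ, sub_eq_zero]
  -- plainPref is bijective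
  have hPinj : Function.Injective (plainPref w m) := by
    intro a b hab
    have h1 : ⟪a - b, a - b⟫ = (0:ℝ) := by
      rw [← plainPref_inner hw m (a - b) (a - b), map_sub, hab, sub_self, inner_zero_left]
    exact sub_eq_zero.mp (inner_self_eq_zero.mp h1)
  have hPsurj : Function.Surjective (plainPref w m) :=
    (LinearMap.injective_iff_surjective).mp hPinj
  -- well-definedness
  have wd : ∀ γ : V, γ ∈ LinearMap.ker (pref w s m + plainPref w m) →
      M.mulVec (Phi w s α m γ) = 0 := by
    intro γ hγ
    rw [kerIff hα hw hs M hM]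
    intro k
    have hx := (hmem γ).mp hγ
    have hBD := (nB hα hw hs k).trans (nD hw k).symm
    simp only [Ccf, Phi_apply, coeffc, ← hx, real_inner_smul_right]
    rw [hBD]
    have := hne ((k : ℕ) + 1)
    rw [show ((↑k + 1 : ℕ)) = ((k:ℕ) + 1) from rfl] at *
    have hn' : ⟪betaD w α ((k:ℕ) + 1), betaD w α ((k:ℕ) + 1)⟫ ≠ 0 := by
      rw [nD hw k]; exact this
    field_simp [nD hw k]
    try ring
  -- the restricted map
  set K := LinearMap.ker (pref w s m + plainPref w m) with hK
  set Ψ : K →ₗ[ℝ] LinearMap.ker M.mulVecLin :=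
    LinearMap.codRestrict (LinearMap.ker M.mulVecLin) ((Phi w s α m).comp K.subtype)
      (fun γ => by
        rw [LinearMap.mem_ker, Matrix.mulVecLin_apply]
        exact wd (γ : V) γ.2) with hΨ
  have hΨapp : ∀ γ : K, (Ψ γ : Fin m → ℝ) = Phi w s α m (γ : V) := fun γ => rfl
  have hinj : Function.Injective Ψ := by
    intro a b hab
    have h1 : Phi w s α m (a : V) = Phi w s α m (b : V) := by
      rw [← hΨapp a, ← hΨapp b, hab]
    have ha := (hmem (a : V)).mp a.2
    have hb := (hmem (b : V)).mp b.2
    rw [h1] at ha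
    have h2 : plainPref w m (a : V) = plainPref w m (b : V) := by
      have := ha.trans hb.symm
      have h3 := smul_right_injective V (two_ne_zero (α := ℝ)) this
      exact h3
    exact Subtype.ext (hPinj h2)
  have hsurj : Function.Surjective Ψ := by
    rintro ⟨c, hc⟩
    have hc' : M.mulVec c = 0 := by rwa [LinearMap.mem_ker, Matrix.mulVecLin_apply] at hc
    have hCc := (kerIff hα hw hs M hM c).mp hc'
    obtain ⟨γ, hγ⟩ := hPsurj ((2:ℝ)⁻¹ • Xc w s α m c)
    have hPhi : Phi w s α m γ = c := by
      funext k
      have hCk := hCc k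
      rw [Ccf, sub_eq_zero] at hCk
      have hBD := (nB hα hw hs k).trans (nD hw k).symm
      rw [hBD] at hCk
      simp only [Phi_apply, coeffc, hγ, real_inner_smul_right]
      rw [show ((↑k + 1 : ℕ)) = ((k:ℕ) + 1) from rfl] at *
      rw [← hCk]
      have hn : ⟪betaD w α ((k:ℕ) + 1), betaD w α ((k:ℕ) + 1)⟫ ≠ 0 := by
        rw [nD hw k]; exact hne _
      field_simp
    have hγK : γ ∈ K := by
      rw [hmem, hPhi, hγ, smul_smul]
      norm_num
    refine ⟨⟨γ, hγK⟩, ?_⟩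
    apply Subtype.ext
    rw [hΨapp]
    exact hPhi
  refine ⟨⟨LinearEquiv.ofBijective Ψ ⟨hinj, hsurj⟩, fun γ => rfl⟩, ?_⟩
  exact (LinearEquiv.ofBijective Ψ ⟨hinj, hsurj⟩).symm.finrank_eq
end
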